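/- Let p_a = 0.5, p_b = 0.91, p_c = 0.26, and define r_b = (1/2)(1−p_a) + (1/2)(1−p_b), r_c = (1/2)(1−p_a) + (1/2)(1−p_c). Let π̃₀ be the stationary probability of residue class 0 for the 3-state Markov chain with success probability r_b in state 0 and r_c in states 1 and 2 (i.e. (π̃₀,π̃₁,π̃₂) solves r_c' π₂-type balance equations with 1−p_b replaced by r_b and 1−p_c by r_c). Then the overall success probability p = r_b π̃₀ + r_c (1−π̃₀) satisfies p > 1/2 (numerically p ≈ 0.5078). -/

import Mathlib

/-- A stationary distribution of the mod-3 chain whose success probability is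
`rb` in residue class 0 and `rc` in residue classes 1 and 2 (the chain moves
`+1 mod 3` on success and `-1 mod 3` on failure). -/
def IsStationaryMix (rb rc : ℝ) (π : Fin 3 → ℝ) : Prop :=
  (∀ i, 0 ≤ π i) ∧ π 0 + π 1 + π 2 = 1 ∧
  rc * π 2 + (1 - rc) * π 1 = π 0 ∧
  rb * π 0 + (1 - rc) * π 2 = π 1 ∧
  rc * π 1 + (1 - rb) * π 0 = π 2

/-- for the mixed channel `C_M^{0.5}` with success probabilities
`rb = (1-pa)/2 + (1-pb)/2` in class 0 and `rc = (1-pa)/2 + (1-pc)/2`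
otherwise, the stationary distribution exists and the overall stationary
success probability `p = rb·π̃₀ + rc·(1-π̃₀)` exceeds `1/2`
(numerically `p ≈ 0.5078`). -/
theorem stmt_4 (pa pb pc rb rc : ℝ)
    (hpa : pa = 0.5) (hpb : pb = 0.91) (hpc : pc = 0.26)
    (hrb : rb = (1 / 2) * (1 - pa) + (1 / 2) * (1 - pb))
    (hrc : rc = (1 / 2) * (1 - pa) + (1 / 2) * (1 - pc)) :
    (∃ π : Fin 3 → ℝ, IsStationaryMix rb rc π) ∧
    ∀ π : Fin 3 → ℝ, IsStationaryMix rb rc π →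
      rb * π 0 + rc * (1 - π 0) > 1 / 2 ∧
      |rb * π 0 + rc * (1 - π 0) - 0.5078| < 0.001 := by
  subst hpa hpb hpc hrb hrc
  constructor
  · refine ⟨![49/142, 433/1704, 683/1704], ?_, ?_, ?_, ?_, ?_⟩
    · intro i
      fin_cases i <;> norm_num
    all_goals norm_num [Matrix.cons_val_two, Matrix.tail_cons, Matrix.head_cons]
  · rintro π ⟨-, hsum, h1, h2, h3⟩
    have h0 : π 0 = 49/142 := by linarith
    constructor
    · rw [h0]; norm_num
    · rw [h0]
      rw [abs_lt]
      constructor <;> norm_num
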